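/- Let A be a ranked alphabet. For every ranked tree t ∈ Trees_A that has at least one internal node, there exists a chain c ∈ Trees_A that has exactly the same number of leaves and exactly the same number of internal nodes as t. -/

import Mathlib

/-- Ranked trees over a set `A` of symbols (the rank of a symbol is given separately
by a function `rank : A → ℕ`; well-formedness is the predicate `RTree.WF`). -/
inductive RTree (A : Type) : Type
  | node : A → List (RTree A) → RTree A

namespace RTree

variable {A : Type}

/-- The subtree `t ↾ x` of `t` rooted at the address `x`; the children of a node with
child list `ts` are addressed by `0, …, ts.length - 1`, and addresses are words of
child indices. Returns `none` if `x` is not a node of `t`. -/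
def subtreeAt : RTree A → List ℕ → Option (RTree A)
  | t, [] => some t
  | node _ ts, i :: x =>
    match ts[i]? with
    | some t' => subtreeAt t' x
    | none => none

/-- The domain `D_t` of `t`: the set of addresses of nodes of `t`. -/
def dom (t : RTree A) : Set (List ℕ) := {x | subtreeAt t x ≠ none}

/-- `size t` is the number of nodes of `t`. -/
noncomputable def size (t : RTree A) : ℕ := (dom t).ncard

/-- The size of the subtree of `t` rooted at `x` (`0` if `x` is not a node of `t`). -/
noncomputable def sizeAt (t : RTree A) (x : List ℕ) : ℕ :=
  match subtreeAt t x with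
  | some s => size s
  | none => 0

/-- The node at address `x` has some child, i.e. it is an internal node (for
well-formed trees this is equivalent to its label having rank at least one). -/
def hasChildAt (t : RTree A) (x : List ℕ) : Prop := ∃ i : ℕ, x ++ [i] ∈ dom t

/-- The number of leaves of `t`. -/
noncomputable def leavesCount (t : RTree A) : ℕ := {x | x ∈ dom t ∧ ¬ hasChildAt t x}.ncard

/-- The number of internal nodes of `t`. -/
noncomputable def internalCount (t : RTree A) : ℕ := {x | x ∈ dom t ∧ hasChildAt t x}.ncard

/-- `t` is a chain: its domain is not just the root, and every (internal) node has at
most one internal child. -/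
def isChain (t : RTree A) : Prop :=
  dom t ≠ {[]} ∧
    ∀ x ∈ dom t, {i : ℕ | x ++ [i] ∈ dom t ∧ hasChildAt t (x ++ [i])}.ncard ≤ 1

/-- Well-formedness of a ranked tree: every node labelled by a symbol of rank `i`
has exactly `i` children. -/
inductive WF (rank : A → ℕ) : RTree A → Prop
  | node (a : A) (ts : List (RTree A)) : ts.length = rank a →
      (∀ t ∈ ts, WF rank t) → WF rank (node a ts)

end RTree

lemma ncard_iUnion_fin {α : Type*} [DecidableEq α] {n : ℕ} (f : Fin n → Set α)
    (hfin : ∀ i, (f i).Finite) (hdisj : Pairwise (Function.onFun Disjoint f)) :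
    (⋃ i, f i).ncard = ∑ i, (f i).ncard := by
  have h : (⋃ i, f i) = ↑(Finset.univ.biUnion fun i => (hfin i).toFinset) := by
    ext x; simp
  rw [h, Set.ncard_coe_finset, Finset.card_biUnion]
  · exact Finset.sum_congr rfl fun i _ => (Set.ncard_eq_toFinset_card _ (hfin i)).symm
  · intro i _ j _ hij
    rw [Function.onFun, Finset.disjoint_left]
    intro x hx hx'
    exact Set.disjoint_left.mp (hdisj hij) ((hfin i).mem_toFinset.mp hx)
      ((hfin j).mem_toFinset.mp hx')

lemma sum_fin_get {α : Type*} {β : Type*} [AddCommMonoid β] (ts : List α) (f : α → β) :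
    ∑ i : Fin ts.length, f ts[(i : ℕ)] = (ts.map f).sum := by
  rw [← List.ofFn_getElem_eq_map ts f, List.sum_ofFn]


namespace RTree
variable {A : Type}

theorem recAux {motive : RTree A → Prop}
    (h : ∀ a ts, (∀ s ∈ ts, motive s) → motive (node a ts)) : ∀ t, motive t
  | node a ts => h a ts fun s hs => recAux h s
termination_by t => sizeOf t
decreasing_by simp_wf; have := List.sizeOf_lt_of_mem hs; omega

@[simp] lemma subtreeAt_nil (t : RTree A) : subtreeAt t [] = some t := by
  cases t <;> rfl

@[simp] lemma mem_dom_nil (t : RTree A) : [] ∈ dom t := by simp [dom]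

lemma mem_dom_cons {a : A} {ts : List (RTree A)} {i : ℕ} {x : List ℕ} :
    (i :: x) ∈ dom (node a ts) ↔ ∃ t', ts[i]? = some t' ∧ x ∈ dom t' := by
  cases h : ts[i]? <;> simp [dom, subtreeAt, h]

@[simp] lemma dom_leaf (a : A) : dom (node a []) = {[]} := by
  ext x
  cases x with
  | nil => simp
  | cons i y => simp [mem_dom_cons]

lemma hasChildAt_nil_node {a : A} {ts : List (RTree A)} :
    hasChildAt (node a ts) [] ↔ ts ≠ [] := by
  simp only [hasChildAt, List.nil_append, mem_dom_cons]
  constructor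
  · rintro ⟨i, t', ht', -⟩ h
    subst h; simp at ht'
  · intro h
    refine ⟨0, ts.head h, ?_, mem_dom_nil _⟩
    cases ts with
    | nil => exact absurd rfl h
    | cons t ts => simp [List.head]

lemma hasChildAt_cons {a : A} {ts : List (RTree A)} {i : ℕ} {x : List ℕ} :
    hasChildAt (node a ts) (i :: x) ↔ ∃ t', ts[i]? = some t' ∧ hasChildAt t' x := by
  simp only [hasChildAt, List.cons_append, mem_dom_cons]
  constructor
  · rintro ⟨j, t', ht', hm⟩; exact ⟨t', ht', j, hm⟩
  · rintro ⟨t', ht', j, hm⟩; exact ⟨j, t', ht', hm⟩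

lemma not_hasChildAt_leaf (a : A) (x : List ℕ) : ¬ hasChildAt (node a []) x := by
  rintro ⟨i, hm⟩
  rw [dom_leaf] at hm
  simp at hm

end RTree


namespace RTree
variable {A : Type}

def leafSet (t : RTree A) : Set (List ℕ) := {x | x ∈ dom t ∧ ¬ hasChildAt t x}
def intSet (t : RTree A) : Set (List ℕ) := {x | x ∈ dom t ∧ hasChildAt t x}

lemma leavesCount_eq (t : RTree A) : leavesCount t = (leafSet t).ncard := rfl
lemma internalCount_eq (t : RTree A) : internalCount t = (intSet t).ncard := rfl

lemma dom_node (a : A) (ts : List (RTree A)) :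
    dom (node a ts) = {[]} ∪ ⋃ i : Fin ts.length, (List.cons (i : ℕ)) '' dom ts[(i : ℕ)] := by
  ext x
  cases x with
  | nil => simp
  | cons i y =>
    simp only [mem_dom_cons, Set.mem_union, Set.mem_singleton_iff, Set.mem_iUnion,
      Set.mem_image]
    constructor
    · rintro ⟨t', ht', hy⟩
      rw [List.getElem?_eq_some_iff] at ht'
      obtain ⟨h, rfl⟩ := ht'
      exact Or.inr ⟨⟨i, h⟩, y, hy, rfl⟩
    · rintro (h | ⟨j, y', hy', h⟩)
      · cases h
      · obtain ⟨rfl, rfl⟩ : (j : ℕ) = i ∧ y' = y := by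
          constructor <;> [exact (List.cons.injEq _ _ _ _ ▸ h).1; exact (List.cons.injEq _ _ _ _ ▸ h).2]
        exact ⟨_, List.getElem?_eq_some_iff.mpr ⟨j.2, rfl⟩, hy'⟩

lemma dom_finite (t : RTree A) : (dom t).Finite := by
  induction t using recAux with
  | _ a ts ih =>
    rw [dom_node]
    refine (Set.finite_singleton _).union (Set.finite_iUnion fun i => ?_)
    exact Set.Finite.image _ (ih _ (ts.getElem_mem i.2))

lemma leafSet_subset (t : RTree A) : leafSet t ⊆ dom t := fun x hx => hx.1
lemma intSet_subset (t : RTree A) : intSet t ⊆ dom t := fun x hx => hx.1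
lemma leafSet_finite (t : RTree A) : (leafSet t).Finite := (dom_finite t).subset (leafSet_subset t)
lemma intSet_finite (t : RTree A) : (intSet t).Finite := (dom_finite t).subset (intSet_subset t)

lemma leafSet_node {a : A} {ts : List (RTree A)} (hne : ts ≠ []) :
    leafSet (node a ts) = ⋃ i : Fin ts.length, (List.cons (i : ℕ)) '' leafSet ts[(i : ℕ)] := by
  ext x
  cases x with
  | nil =>
    simp only [leafSet, Set.mem_setOf_eq, mem_dom_nil, true_and, hasChildAt_nil_node,
      Set.mem_iUnion, Set.mem_image]
    simp [hne]
  | cons i y =>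
    simp only [leafSet, Set.mem_setOf_eq, mem_dom_cons, hasChildAt_cons, Set.mem_iUnion,
      Set.mem_image]
    constructor
    · rintro ⟨⟨t', ht', hy⟩, hnc⟩
      rw [List.getElem?_eq_some_iff] at ht'
      obtain ⟨h, rfl⟩ := ht'
      refine ⟨⟨i, h⟩, y, ⟨hy, fun hc => hnc ⟨_, List.getElem?_eq_some_iff.mpr ⟨h, rfl⟩, hc⟩⟩, rfl⟩
    · rintro ⟨j, y', ⟨hy', hnc⟩, h⟩
      injection h with h1 h2
      subst h1; subst h2
      have hj : ts[(j : ℕ)]? = some ts[(j : ℕ)] := List.getElem?_eq_some_iff.mpr ⟨j.2, rfl⟩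
      refine ⟨⟨_, hj, hy'⟩, ?_⟩
      rintro ⟨t', ht', hc⟩
      rw [hj] at ht'; injection ht' with h; subst h
      exact hnc hc

lemma intSet_node {a : A} {ts : List (RTree A)} (hne : ts ≠ []) :
    intSet (node a ts) = {[]} ∪ ⋃ i : Fin ts.length, (List.cons (i : ℕ)) '' intSet ts[(i : ℕ)] := by
  ext x
  cases x with
  | nil =>
    simp only [intSet, Set.mem_setOf_eq, mem_dom_nil, true_and, hasChildAt_nil_node,
      Set.mem_union, Set.mem_singleton_iff, Set.mem_iUnion, Set.mem_image]
    simp [hne]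
  | cons i y =>
    simp only [intSet, Set.mem_setOf_eq, mem_dom_cons, hasChildAt_cons, Set.mem_union,
      Set.mem_singleton_iff, Set.mem_iUnion, Set.mem_image]
    constructor
    · rintro ⟨⟨t', ht', hy⟩, ⟨t'', ht'', hc⟩⟩
      rw [ht'] at ht''; injection ht'' with h; subst h
      rw [List.getElem?_eq_some_iff] at ht'
      obtain ⟨h, rfl⟩ := ht'
      exact Or.inr ⟨⟨i, h⟩, y, ⟨hy, hc⟩, rfl⟩
    · rintro (h | ⟨j, y', ⟨hy', hc⟩, h⟩)
      · cases h
      · injection h with h1 h2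
        subst h1; subst h2
        have hj : ts[(j : ℕ)]? = some ts[(j : ℕ)] := List.getElem?_eq_some_iff.mpr ⟨j.2, rfl⟩
        exact ⟨⟨_, hj, hy'⟩, ⟨_, hj, hc⟩⟩

lemma leafSet_leaf (a : A) : leafSet (node a []) = {[]} := by
  ext x
  simp only [leafSet, Set.mem_setOf_eq, dom_leaf, Set.mem_singleton_iff]
  exact ⟨fun h => h.1, fun h => ⟨h, not_hasChildAt_leaf a x⟩⟩

lemma intSet_leaf (a : A) : intSet (node a []) = ∅ := by
  ext x
  simp only [intSet, Set.mem_setOf_eq, Set.mem_empty_iff_false, iff_false, not_and]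
  exact fun _ => not_hasChildAt_leaf a x

end RTree

namespace RTree
variable {A : Type}

lemma cons_injective (i : ℕ) : Function.Injective (List.cons i : List ℕ → List ℕ) :=
  fun x y h => by injection h

lemma disjoint_cons_images {i j : ℕ} (hij : i ≠ j) (s t : Set (List ℕ)) :
    Disjoint ((List.cons i) '' s) ((List.cons j) '' t) := by
  rw [Set.disjoint_left]
  rintro x ⟨y, -, rfl⟩ ⟨z, -, hz⟩
  injection hz with h
  exact hij h.symm

lemma ncard_iUnion_cons {n : ℕ} (f : Fin n → Set (List ℕ)) (hfin : ∀ i, (f i).Finite) :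
    (⋃ i : Fin n, (List.cons (i : ℕ)) '' f i).ncard = ∑ i : Fin n, (f i).ncard := by
  rw [ncard_iUnion_fin _ (fun i => (hfin i).image _)
    (fun i j hij => disjoint_cons_images (fun h => hij (Fin.ext h)) _ _)]
  exact Finset.sum_congr rfl fun i _ => Set.ncard_image_of_injective _ (cons_injective _)

lemma leavesCount_node {a : A} {ts : List (RTree A)} (hne : ts ≠ []) :
    leavesCount (node a ts) = (ts.map leavesCount).sum := by
  rw [leavesCount_eq, leafSet_node hne,
    ncard_iUnion_cons _ (fun i => leafSet_finite _), ← sum_fin_get ts leavesCount]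
  rfl

lemma internalCount_node {a : A} {ts : List (RTree A)} (hne : ts ≠ []) :
    internalCount (node a ts) = 1 + (ts.map internalCount).sum := by
  have hdisj : Disjoint ({[]} : Set (List ℕ))
      (⋃ i : Fin ts.length, (List.cons (i : ℕ)) '' intSet ts[(i : ℕ)]) := by
    rw [Set.disjoint_left]
    rintro x hx hx'
    simp only [Set.mem_singleton_iff] at hx
    subst hx
    simp only [Set.mem_iUnion, Set.mem_image] at hx'
    obtain ⟨i, y, -, h⟩ := hx'
    cases h
  rw [internalCount_eq, intSet_node hne,
    Set.ncard_union_eq hdisj (Set.finite_singleton _)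
      (Set.finite_iUnion fun i => (intSet_finite _).image _),
    Set.ncard_singleton, ncard_iUnion_cons _ (fun i => intSet_finite _),
    ← sum_fin_get ts internalCount]
  rfl

lemma leavesCount_leaf (a : A) : leavesCount (node a []) = 1 := by
  rw [leavesCount_eq, leafSet_leaf]; exact Set.ncard_singleton _

lemma internalCount_leaf (a : A) : internalCount (node a []) = 0 := by
  rw [internalCount_eq, intSet_leaf]; exact Set.ncard_empty _

end RTree

namespace RTree
variable {A : Type}

def intLabels : RTree A → List A
  | node a ts =>
    if ts.isEmpty then [] else a :: (ts.attach.map fun s => intLabels s.1).flatten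
decreasing_by have := List.sizeOf_lt_of_mem s.2; simp; omega

lemma intLabels_leaf (a : A) : intLabels (node a []) = [] := by simp [intLabels]

lemma intLabels_node {a : A} {ts : List (RTree A)} (hne : ts ≠ []) :
    intLabels (node a ts) = a :: (ts.map intLabels).flatten := by
  rw [intLabels]
  simp [hne, List.attach_map_val (l := ts) (f := intLabels)]

lemma length_intLabels (t : RTree A) : (intLabels t).length = internalCount t := by
  induction t using recAux with
  | _ a ts ih =>
    rcases eq_or_ne ts [] with rfl | hne
    · rw [intLabels_leaf, internalCount_leaf]; rfl
    · rw [intLabels_node hne, internalCount_node hne, List.length_cons,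
        List.length_flatten, List.map_map, Nat.add_comm]
      congr 1
      exact congrArg List.sum (List.map_congr_left fun s hs => ih s hs)

lemma rank_pos_of_mem_intLabels {rank : A → ℕ} {t : RTree A} (hwf : WF rank t) :
    ∀ a ∈ intLabels t, 1 ≤ rank a := by
  induction t using recAux with
  | _ b ts ih =>
    rcases eq_or_ne ts [] with rfl | hne
    · rw [intLabels_leaf]; intro a ha; cases ha
    · cases hwf with
    | node _ _ hlen hts =>
      rw [intLabels_node hne]
      intro a ha
      rcases List.mem_cons.mp ha with rfl | ha
      · rw [← hlen]
        exact Nat.pos_of_ne_zero (fun h => hne (List.length_eq_zero_iff.mp h))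
      · rw [List.mem_flatten] at ha
        obtain ⟨l, hl, hal⟩ := ha
        rw [List.mem_map] at hl
        obtain ⟨s, hs, rfl⟩ := hl
        exact ih s hs (hts s hs) a hal

lemma leavesCount_eq_intLabels {rank : A → ℕ} {t : RTree A} (hwf : WF rank t) :
    leavesCount t = 1 + ((intLabels t).map (fun a => rank a - 1)).sum := by
  induction t using recAux with
  | _ b ts ih =>
    rcases eq_or_ne ts [] with rfl | hne
    · rw [intLabels_leaf, leavesCount_leaf]; rfl
    · cases hwf with
    | node _ _ hlen hts =>
      rw [intLabels_node hne, leavesCount_node hne, List.map_cons, List.sum_cons]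
      have hts' : ts.map leavesCount
          = ts.map (fun s => 1 + ((intLabels s).map (fun a => rank a - 1)).sum) :=
        List.map_congr_left fun s hs => ih s hs (hts s hs)
      have h1 : ∀ (l : List (RTree A)) (g : RTree A → ℕ),
          (l.map fun s => 1 + g s).sum = l.length + (l.map g).sum := by
        intro l g
        induction l with
        | nil => simp
        | cons x l ihl => simp [ihl]; omega
      have h2 : ((List.map intLabels ts).flatten.map (fun a => rank a - 1)).sum
          = (ts.map (fun s => ((intLabels s).map (fun a => rank a - 1)).sum)).sum := by
        rw [List.map_flatten, List.sum_flatten, List.map_map, List.map_map]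
        rfl
      have hr : 1 ≤ rank b := by
        rw [← hlen]
        exact Nat.pos_of_ne_zero (fun h => hne (List.length_eq_zero_iff.mp h))
      rw [hts', h1, h2, hlen]
      omega
end RTree

namespace RTree
variable {A : Type}

def chain (rank : A → ℕ) (a0 : A) : List A → RTree A
  | [] => node a0 []
  | a :: l => node a (chain rank a0 l :: List.replicate (rank a - 1) (node a0 []))

lemma leavesCount_chain (rank : A → ℕ) (a0 : A) (l : List A) :
    leavesCount (chain rank a0 l) = 1 + (l.map fun a => rank a - 1).sum := by
  induction l with
  | nil => simpa [chain] using leavesCount_leaf a0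
  | cons a l ih =>
    rw [chain, leavesCount_node (by simp), List.map_cons, List.sum_cons, ih,
      List.map_replicate, leavesCount_leaf, List.sum_replicate, List.map_cons, List.sum_cons]
    simp; omega

lemma internalCount_chain (rank : A → ℕ) (a0 : A) (l : List A) :
    internalCount (chain rank a0 l) = l.length := by
  induction l with
  | nil => simpa [chain] using internalCount_leaf a0
  | cons a l ih =>
    rw [chain, internalCount_node (by simp), List.map_cons, List.sum_cons, ih,
      List.map_replicate, internalCount_leaf, List.sum_replicate, List.length_cons]
    simp; omega

lemma wf_chain {rank : A → ℕ} {a0 : A} (h0 : rank a0 = 0) {l : List A}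
    (hl : ∀ a ∈ l, 1 ≤ rank a) : WF rank (chain rank a0 l) := by
  induction l with
  | nil => exact WF.node a0 [] (by simp [h0]) (by simp)
  | cons a l ih =>
    rw [chain]
    refine WF.node a _ ?_ ?_
    · have := hl a (List.mem_cons_self (a := a) (l := l))
      simp; omega
    · intro s hs
      rcases List.mem_cons.mp hs with rfl | hs
      · exact ih fun b hb => hl b (List.mem_cons_of_mem a hb)
      · rw [List.eq_of_mem_replicate hs]
        exact WF.node a0 [] (by simp [h0]) (by simp)

lemma child_of_chain_cons {rank : A → ℕ} {a0 a : A} {l : List A} {j : ℕ} {t' : RTree A}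
    (h : (chain rank a0 l :: List.replicate (rank a - 1) (node a0 []))[j]? = some t') :
    (j = 0 ∧ t' = chain rank a0 l) ∨ t' = node a0 [] := by
  cases j with
  | zero => simp at h; exact Or.inl ⟨rfl, h.symm⟩
  | succ j' =>
    simp only [List.getElem?_cons_succ, List.getElem?_replicate] at h
    split at h
    · exact Or.inr (Option.some_injective _ h).symm
    · cases h

lemma chain_childSet (rank : A → ℕ) (a0 : A) (l : List A) (x : List ℕ) :
    {i : ℕ | x ++ [i] ∈ dom (chain rank a0 l) ∧ hasChildAt (chain rank a0 l) (x ++ [i])}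
      ⊆ {0} := by
  induction l generalizing x with
  | nil =>
    intro i ⟨h1, _⟩
    rw [chain, dom_leaf] at h1
    simp at h1
  | cons a l ih =>
    intro i ⟨hdom, hchild⟩
    rw [chain] at hdom hchild
    cases x with
    | nil =>
      rw [List.nil_append] at hchild
      show i = 0
      by_contra hi
      obtain ⟨t', ht', hc⟩ := hasChildAt_cons.mp hchild
      rcases child_of_chain_cons ht' with ⟨rfl, rfl⟩ | rfl
      · exact hi rfl
      · exact not_hasChildAt_leaf _ _ hc
    | cons j y =>
      rw [List.cons_append] at hdom hchild
      obtain ⟨t', ht', hy⟩ := mem_dom_cons.mp hdom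
      obtain ⟨t'', ht'', hc⟩ := hasChildAt_cons.mp hchild
      rw [ht'] at ht''
      injection ht'' with he; subst he
      rcases child_of_chain_cons ht' with ⟨rfl, rfl⟩ | rfl
      · exact ih y ⟨hy, hc⟩
      · rw [dom_leaf] at hy
        simp at hy

lemma isChain_chain (rank : A → ℕ) (a0 : A) {l : List A} (hl : l ≠ []) :
    dom (chain rank a0 l) ≠ {[]} ∧
      ∀ x ∈ dom (chain rank a0 l),
        {i : ℕ | x ++ [i] ∈ dom (chain rank a0 l)
          ∧ hasChildAt (chain rank a0 l) (x ++ [i])}.ncard ≤ 1 := by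
  constructor
  · obtain ⟨a, l', rfl⟩ := List.exists_cons_of_ne_nil hl
    intro hd
    have h0 : [0] ∈ dom (chain rank a0 (a :: l')) := by
      rw [chain]
      exact mem_dom_cons.mpr ⟨chain rank a0 l', by simp, mem_dom_nil _⟩
    rw [hd] at h0
    simp at h0
  · intro x _
    calc _ ≤ ({0} : Set ℕ).ncard :=
          Set.ncard_le_ncard (chain_childSet rank a0 l x) (Set.finite_singleton _)
      _ = 1 := Set.ncard_singleton _

end RTree

/-- Let `A` be a ranked alphabet (with a rank-0 symbol). For every
ranked tree `t` over `A` with at least one internal node there is a chain `c` over `A`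
with exactly the same number of leaves and exactly the same number of internal nodes. -/
theorem stmt11 (A : Type) [Fintype A] (rank : A → ℕ) (h0 : ∃ a, rank a = 0)
    (t : RTree A) (hwf : RTree.WF rank t) (hint : 1 ≤ RTree.internalCount t) :
    ∃ c : RTree A, RTree.WF rank c ∧ RTree.isChain c ∧
      RTree.leavesCount c = RTree.leavesCount t ∧
      RTree.internalCount c = RTree.internalCount t := by
  obtain ⟨a0, ha0⟩ := h0
  have hlen : (RTree.intLabels t).length = RTree.internalCount t := RTree.length_intLabels t
  have hl : ∀ a ∈ RTree.intLabels t, 1 ≤ rank a := RTree.rank_pos_of_mem_intLabels hwf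
  have hne : RTree.intLabels t ≠ [] := by
    intro h
    rw [h] at hlen
    simp at hlen
    omega
  refine ⟨RTree.chain rank a0 (RTree.intLabels t), RTree.wf_chain ha0 hl,
    RTree.isChain_chain rank a0 hne, ?_, ?_⟩
  · rw [RTree.leavesCount_chain, RTree.leavesCount_eq_intLabels hwf]
  · rw [RTree.internalCount_chain, hlen]
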